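/- Let n ≥ 1, let p > 0 be a real number with p ≠ 1/2, and let γ : ℝ → EuclideanSpace ℝ (Fin n) be a smooth curve with ‖γ'(s)‖ = 1 for all s and γ''(s) ≠ 0 for all s. If the map s ↦ ‖γ''(s)‖^{p-2}·γ''(s) has vanishing second derivative at every s ∈ ℝ (i.e. γ is a p-biharmonic curve in Euclidean space), then the function s ↦ ‖γ''(s)‖ is constant on ℝ. -/

import Mathlib

open scoped RealInnerProductSpace

/-- A non-geodesic `p`-biharmonic curve in Euclidean space, parametrized by arclength,
has constant geodesic curvature whenever `p ≠ 1/2`. -/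
theorem stmt_17 (n : ℕ) (hn : 1 ≤ n) (p : ℝ) (hp : 0 < p) (hp2 : p ≠ 1 / 2)
    (γ : ℝ → EuclideanSpace ℝ (Fin n)) (hγ : ContDiff ℝ (⊤ : ℕ∞) γ)
    (harc : ∀ s, ‖deriv γ s‖ = 1)
    (hne : ∀ s, deriv (deriv γ) s ≠ 0)
    (hbih : ∀ s, deriv (deriv
      (fun t => ‖deriv (deriv γ) t‖ ^ (p - 2) • deriv (deriv γ) t)) s = 0) :
    ∃ c : ℝ, ∀ s : ℝ, ‖deriv (deriv γ) s‖ = c := by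
  have hγ' : ContDiff ℝ ((⊤ : ℕ∞) : WithTop ℕ∞) γ := hγ
  set T : ℝ → EuclideanSpace ℝ (Fin n) := deriv γ with hTdef
  have hTcd : ContDiff ℝ ((⊤ : ℕ∞) : WithTop ℕ∞) T := (contDiff_infty_iff_deriv.mp hγ').2
  set N : ℝ → EuclideanSpace ℝ (Fin n) := deriv T with hNdef
  have hNcd : ContDiff ℝ ((⊤ : ℕ∞) : WithTop ℕ∞) N := (contDiff_infty_iff_deriv.mp hTcd).2
  have hTd : Differentiable ℝ T := hTcd.differentiable (by simp)
  have hNd : Differentiable ℝ N := hNcd.differentiable (by simp)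
  have hN'd : Differentiable ℝ (deriv N) :=
    ((contDiff_infty_iff_deriv.mp hNcd).2).differentiable (by simp)
  have hκpos : ∀ s, (0 : ℝ) < ‖N s‖ := fun s => norm_pos_iff.mpr (hne s)
  have hκne : ∀ s, ‖N s‖ ≠ 0 := fun s => (hκpos s).ne'
  have hκd : ∀ s, DifferentiableAt ℝ (fun t => ‖N t‖) s :=
    fun s => (hNd s).norm ℝ (hne s)
  -- the coefficient function
  have hgd : ∀ s, DifferentiableAt ℝ (fun t => ‖N t‖ ^ (p - 2)) s :=
    fun s => (hκd s).rpow_const (Or.inl (hκne s))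
  set F : ℝ → EuclideanSpace ℝ (Fin n) := fun t => ‖N t‖ ^ (p - 2) • N t with hFdef
  have hgcd : ContDiff ℝ ((⊤ : ℕ∞) : WithTop ℕ∞) (fun t => ‖N t‖ ^ (p - 2)) := by
    rw [contDiff_iff_contDiffAt]
    intro s
    exact ((hNcd.contDiffAt).norm ℝ (hne s)).rpow_const_of_ne (hκne s)
  have hFcd : ContDiff ℝ ((⊤ : ℕ∞) : WithTop ℕ∞) F := hgcd.smul hNcd
  have hFd : Differentiable ℝ F := hFcd.differentiable (by simp)
  have hF'd : Differentiable ℝ (deriv F) :=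
    ((contDiff_infty_iff_deriv.mp hFcd).2).differentiable (by simp)
  -- ⟪T, N⟫ = 0
  have hq : (fun t => ⟪T t, T t⟫) = fun _ => (1 : ℝ) := by
    funext t
    rw [real_inner_self_eq_norm_sq, harc t]; norm_num
  have hTN : ∀ s, ⟪N s, T s⟫ = 0 := by
    intro s
    have h1 : deriv (fun t => ⟪T t, T t⟫) s = 0 := by
      rw [hq]; simp
    rw [deriv_inner_apply (𝕜 := ℝ) (hTd s) (hTd s)] at h1
    have hcomm := real_inner_comm (T s) (deriv T s)
    show ⟪deriv T s, T s⟫ = 0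
    linarith
  -- κ^{p-2} * κ^2 = κ^p
  have hmul : ∀ s, ‖N s‖ ^ (p - 2) * ‖N s‖ ^ (2 : ℕ) = ‖N s‖ ^ p := by
    intro s
    rw [← Real.rpow_natCast (‖N s‖) 2, ← Real.rpow_add (hκpos s)]
    norm_num
  -- ⟪F, T⟫ = 0
  have hφ : (fun t => ⟪F t, T t⟫) = fun _ => (0 : ℝ) := by
    funext t
    simp only [hFdef, real_inner_smul_left, hTN t, mul_zero]
  -- ⟪F', T⟫ = -κ^p
  have hψ : (fun t => ⟪deriv F t, T t⟫) = fun t => -(‖N t‖ ^ p) := by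
    funext s
    have h1 : deriv (fun t => ⟪F t, T t⟫) s = 0 := by rw [hφ]; simp
    rw [deriv_inner_apply (𝕜 := ℝ) (hFd s) (hTd s)] at h1
    have h2 : ⟪F s, deriv T s⟫ = ‖N s‖ ^ p := by
      simp only [hFdef, real_inner_smul_left]
      rw [real_inner_self_eq_norm_sq, ← hmul s]
    linarith [h1, h2]
  -- ⟪N', N⟫ = κ * κ'
  have hNN' : ∀ s, ⟪deriv N s, N s⟫ = ‖N s‖ * deriv (fun t => ‖N t‖) s := by
    intro s
    have h1 : deriv (fun t => ⟪N t, N t⟫) s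
        = ⟪N s, deriv N s⟫ + ⟪deriv N s, N s⟫ :=
      deriv_inner_apply (𝕜 := ℝ) (hNd s) (hNd s)
    have h2 : (fun t => ⟪N t, N t⟫) = fun t => ‖N t‖ ^ (2 : ℕ) := by
      funext t; rw [real_inner_self_eq_norm_sq]
    have h3 : deriv (fun t => ‖N t‖ ^ (2 : ℕ)) s
        = (2 : ℝ) * ‖N s‖ ^ (1 : ℕ) * deriv (fun t => ‖N t‖) s := by
      exact (((hκd s).hasDerivAt).pow 2).deriv
    rw [h2, h3] at h1
    have hcomm := real_inner_comm (N s) (deriv N s)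
    simp only [pow_one] at h1
    linarith
  -- deriv of ⟪F', T⟫ computed two ways
  have key : ∀ s, deriv (fun t => ‖N t‖) s = 0 := by
    intro s
    have hA : deriv (fun t => ⟪deriv F t, T t⟫) s = ⟪deriv F s, deriv T s⟫ := by
      rw [deriv_inner_apply (𝕜 := ℝ) (hF'd s) (hTd s), hbih s]
      simp
    have hB : deriv (fun t => ⟪deriv F t, T t⟫) s
        = -(deriv (fun t => ‖N t‖) s * p * ‖N s‖ ^ (p - 1)) := by
      rw [hψ]
      rw [deriv.fun_neg]
      rw [deriv_rpow_const (hκd s) (Or.inl (hκne s))]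
    -- compute ⟪F' s, N s⟫
    have hC : ⟪deriv F s, deriv T s⟫
        = (p - 1) * ‖N s‖ ^ (p - 1) * deriv (fun t => ‖N t‖) s := by
      have hds : deriv F s = ‖N s‖ ^ (p - 2) • deriv N s
          + (deriv (fun t => ‖N t‖) s * (p - 2) * ‖N s‖ ^ (p - 2 - 1)) • N s := by
        rw [hFdef]
        rw [deriv_fun_smul (hgd s) (hNd s)]
        rw [deriv_rpow_const (hκd s) (Or.inl (hκne s))]
      rw [hds]
      rw [inner_add_left, real_inner_smul_left, real_inner_smul_left]
      rw [hNN' s, real_inner_self_eq_norm_sq]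
      have e1 : ‖N s‖ ^ (p - 2) * ‖N s‖ = ‖N s‖ ^ (p - 1) := by
        nth_rewrite 2 [← Real.rpow_one (‖N s‖)]
        rw [← Real.rpow_add (hκpos s)]
        congr 1; ring
      have e2 : ‖N s‖ ^ (p - 2 - 1) * ‖N s‖ ^ (2 : ℕ) = ‖N s‖ ^ (p - 1) := by
        rw [← Real.rpow_natCast (‖N s‖) 2, ← Real.rpow_add (hκpos s)]
        congr 1; push_cast; ring
      linear_combination (deriv (fun t => ‖N t‖) s) * e1
        + ((p - 2) * deriv (fun t => ‖N t‖) s) * e2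
    have hzero : ((2 : ℝ) * p - 1) * (‖N s‖ ^ (p - 1) * deriv (fun t => ‖N t‖) s) = 0 := by
      have := hA.symm.trans hB
      rw [hC] at this
      nlinarith [this]
    have h2p : (2 : ℝ) * p - 1 ≠ 0 := by
      intro h; apply hp2; linarith
    have := (mul_eq_zero.mp hzero).resolve_left h2p
    have hκp : ‖N s‖ ^ (p - 1) ≠ 0 := (Real.rpow_pos_of_pos (hκpos s) _).ne'
    exact (mul_eq_zero.mp this).resolve_left hκp
  refine ⟨‖N 0‖, fun s => ?_⟩
  exact is_const_of_deriv_eq_zero (fun t => hκd t) key s 0
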